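/- For natural numbers n and p with 1 ≤ p and 2p ≤ n, the map sending a ballot sequence to its descent-height sequence is a bijection from the set of ballot sequences of length n with p down-steps onto the set of integer sequences (a_1,…,a_p) satisfying a_j ≥ 1 for all j, a_{j+1} ≥ a_j − 1 for all 1 ≤ j < p, and a_p ≤ n − 2p + 1. -/

import Mathlib

open scoped BigOperators

/-- A ballot sequence of length `n` with `p` down-steps. -/
def IsBallot (n p : ℕ) (ε : Fin n → ℤ) : Prop :=
  (∀ i, ε i = 1 ∨ ε i = -1) ∧
  (Finset.univ.filter fun i => ε i = -1).card = p ∧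
  ∀ i : Fin n, 0 ≤ ∑ j ∈ Finset.univ.filter (fun j => j ≤ i), ε j

/-- The descent-height sequence: the list of partial sums just before each
down-step, in increasing order of position. -/
def descHeights (n : ℕ) (ε : Fin n → ℤ) : List ℤ :=
  ((List.finRange n).filter fun i => decide (ε i = -1)).map
    fun i => ∑ k ∈ Finset.univ.filter (fun k => k < i), ε k


namespace BallotAux

variable {n p : ℕ}

def downList (n : ℕ) (ε : Fin n → ℤ) : List (Fin n) :=
  (List.finRange n).filter fun i => decide (ε i = -1)

lemma mem_downList {ε : Fin n → ℤ} {i : Fin n} : i ∈ downList n ε ↔ ε i = -1 := by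
  simp [downList]

lemma sorted_downList (ε : Fin n → ℤ) : (downList n ε).Pairwise (· < ·) :=
  List.Pairwise.sublist (List.filter_sublist) (List.pairwise_lt_finRange n)

lemma length_downList (ε : Fin n → ℤ) :
    (downList n ε).length = (Finset.univ.filter fun i => ε i = -1).card := rfl

lemma sum_pm (ε : Fin n → ℤ) (h1 : ∀ i, ε i = 1 ∨ ε i = -1) (S : Finset (Fin n)) :
    ∑ k ∈ S, ε k = S.card - 2 * (S.filter fun k => ε k = -1).card := by
  classical
  induction S using Finset.induction_on with
  | empty => simp
  | @insert x S hx ih =>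
    rw [Finset.sum_insert hx, Finset.filter_insert, ih]
    rcases h1 x with hv | hv
    · have : ¬ (ε x = -1) := by rw [hv]; decide
      simp only [this, if_false, hv, Finset.card_insert_of_notMem hx]
      push_cast; ring
    · have hxn : x ∉ S.filter fun k => ε k = -1 := fun hc => hx (Finset.mem_of_mem_filter _ hc)
      simp only [hv, if_true, Finset.card_insert_of_notMem hxn,
        Finset.card_insert_of_notMem hx]
      push_cast; ring

lemma filter_lt_eq (i : Fin n) : (Finset.univ.filter fun k => k < i) = Finset.Iio i := by
  ext; simp

lemma filter_le_eq (i : Fin n) : (Finset.univ.filter fun k => k ≤ i) = Finset.Iic i := by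
  ext; simp

lemma height_lt (ε : Fin n → ℤ) (h1 : ∀ i, ε i = 1 ∨ ε i = -1) (i : Fin n) :
    ∑ k ∈ Finset.univ.filter (fun k => k < i), ε k
      = (i : ℤ) - 2 * ((Finset.univ.filter fun k => ε k = -1 ∧ k < i).card : ℤ) := by
  have hset : ((Finset.Iio i).filter fun k => ε k = -1)
      = (Finset.univ.filter fun k => ε k = -1 ∧ k < i) := by ext k; simp [and_comm]
  rw [sum_pm ε h1, filter_lt_eq, Fin.card_Iio, hset]

lemma height_le (ε : Fin n → ℤ) (h1 : ∀ i, ε i = 1 ∨ ε i = -1) (i : Fin n) :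
    ∑ k ∈ Finset.univ.filter (fun k => k ≤ i), ε k
      = ((i : ℤ) + 1) - 2 * ((Finset.univ.filter fun k => ε k = -1 ∧ k ≤ i).card : ℤ) := by
  rw [sum_pm ε h1, filter_le_eq, Fin.card_Iic]
  have : ((Finset.Iic i).filter fun k => ε k = -1)
      = (Finset.univ.filter fun k => ε k = -1 ∧ k ≤ i) := by ext k; simp [and_comm]
  rw [this]; push_cast; ring

lemma sum_le_split (ε : Fin n → ℤ) (i : Fin n) :
    ∑ k ∈ Finset.univ.filter (fun k => k ≤ i), ε k
      = (∑ k ∈ Finset.univ.filter (fun k => k < i), ε k) + ε i := by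
  have hins : (Finset.univ.filter fun k => k ≤ i)
      = insert i (Finset.univ.filter fun k => k < i) := by
    ext k
    simp only [Finset.mem_filter, Finset.mem_univ, true_and, Finset.mem_insert]
    constructor
    · intro hk; rcases eq_or_lt_of_le hk with h' | h' <;> [left; right] <;> assumption
    · rintro (rfl | h') <;> [exact le_refl _; exact le_of_lt h']
  rw [hins, Finset.sum_insert (by simp)]
  ring

lemma count_lt_get {L : List (Fin n)} (hs : L.Pairwise (· < ·)) (j : ℕ) (hj : j < L.length) :
    (Finset.univ.filter fun k => k ∈ L ∧ k < L.get ⟨j, hj⟩).card = j := by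
  classical
  have hmono : StrictMono L.get := (List.sortedLT_iff_pairwise.mpr hs).strictMono_get
  have himg : (Finset.univ.filter fun k => k ∈ L ∧ k < L.get ⟨j, hj⟩)
      = Finset.image (fun m : Fin j => L.get ⟨(m : ℕ), (m.2.trans hj)⟩) Finset.univ := by
    ext k
    simp only [Finset.mem_filter, Finset.mem_univ, true_and, Finset.mem_image]
    constructor
    · rintro ⟨hkL, hklt⟩
      obtain ⟨m, rfl⟩ := List.mem_iff_get.mp hkL
      have hmj : (m : ℕ) < j := by
        by_contra hge
        exact absurd (hmono.monotone (show (⟨j, hj⟩ : Fin L.length) ≤ m by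
          exact Fin.mk_le_of_le_val (le_of_not_gt hge))) (not_le.mpr hklt)
      exact ⟨⟨(m : ℕ), hmj⟩, by congr 1⟩
    · rintro ⟨m, rfl⟩
      refine ⟨List.get_mem _ _, hmono ?_⟩
      exact m.2
  rw [himg, Finset.card_image_of_injective _ (fun m m' hmm => by
    have := hmono.injective hmm
    exact Fin.ext (by simpa [Fin.ext_iff] using this)), Finset.card_univ, Fintype.card_fin]


def descHeights' (n : ℕ) (ε : Fin n → ℤ) : List ℤ :=
  (downList n ε).map fun i => ∑ k ∈ Finset.univ.filter (fun k => k < i), ε k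

lemma length_descHeights' (ε : Fin n → ℤ) :
    (descHeights' n ε).length = (downList n ε).length := by
  simp [descHeights']

lemma getD_descHeights' (ε : Fin n → ℤ) (h1 : ∀ i, ε i = 1 ∨ ε i = -1)
    (j : ℕ) (hj : j < (downList n ε).length) :
    (descHeights' n ε).getD j 0
      = ((downList n ε).get ⟨j, hj⟩ : ℤ) - 2 * j := by
  have hj' : j < (descHeights' n ε).length := by simpa [length_descHeights'] using hj
  rw [List.getD_eq_getElem _ _ hj']
  have h2 : (descHeights' n ε)[j]'hj' = ∑ k ∈ Finset.univ.filter
      (fun k => k < (downList n ε).get ⟨j, hj⟩), ε k := by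
    simp [descHeights', List.getElem_map]
  rw [h2, height_lt ε h1]
  have hset : (Finset.univ.filter fun k =>
      ε k = -1 ∧ k < (downList n ε).get ⟨j, hj⟩)
      = (Finset.univ.filter fun k =>
        k ∈ downList n ε ∧ k < (downList n ε).get ⟨j, hj⟩) := by
    ext k
    simp [mem_downList]
  rw [hset, count_lt_get (sorted_downList ε) j hj]


lemma sum_lt_get (ε : Fin n → ℤ) (h1 : ∀ i, ε i = 1 ∨ ε i = -1)
    (j : ℕ) (hj : j < (downList n ε).length) :
    ∑ k ∈ Finset.univ.filter (fun k => k < (downList n ε).get ⟨j, hj⟩), ε k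
      = ((downList n ε).get ⟨j, hj⟩ : ℤ) - 2 * j := by
  rw [height_lt ε h1]
  have hset : (Finset.univ.filter fun k =>
      ε k = -1 ∧ k < (downList n ε).get ⟨j, hj⟩)
      = (Finset.univ.filter fun k =>
        k ∈ downList n ε ∧ k < (downList n ε).get ⟨j, hj⟩) := by
    ext k
    simp [mem_downList]
  rw [hset, count_lt_get (sorted_downList ε) j hj]

lemma forward_mem (hp : 1 ≤ p) (ε : Fin n → ℤ)
    (h1 : ∀ i, ε i = 1 ∨ ε i = -1)
    (hcard : (Finset.univ.filter fun i => ε i = -1).card = p)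
    (h3 : ∀ i : Fin n, 0 ≤ ∑ k ∈ Finset.univ.filter (fun k => k ≤ i), ε k) :
    (∀ j : Fin p, 1 ≤ (descHeights' n ε).getD (j : ℕ) 0) ∧
    (∀ (j : Fin p) (hj : (j : ℕ) + 1 < p),
      (descHeights' n ε).getD (j : ℕ) 0 - 1 ≤ (descHeights' n ε).getD ((j : ℕ) + 1) 0) ∧
    (descHeights' n ε).getD (p - 1) 0 ≤ (n : ℤ) - 2 * (p : ℤ) + 1 := by
  have hlen : (downList n ε).length = p := by rw [length_downList, hcard]
  have hL := sorted_downList ε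
  refine ⟨?_, ?_, ?_⟩
  · intro j
    have hj : (j : ℕ) < (downList n ε).length := by omega
    set i := (downList n ε).get ⟨(j : ℕ), hj⟩ with hi
    have hmem : ε i = -1 := mem_downList.mp (List.get_mem _ _)
    have := h3 i
    rw [sum_le_split ε i, sum_lt_get ε h1 (j : ℕ) hj, hmem] at this
    rw [getD_descHeights' ε h1 (j : ℕ) hj]
    omega
  · intro j hj
    have hj0 : (j : ℕ) < (downList n ε).length := by omega
    have hj1 : (j : ℕ) + 1 < (downList n ε).length := by omega
    rw [getD_descHeights' ε h1 (j : ℕ) hj0, getD_descHeights' ε h1 ((j : ℕ) + 1) hj1]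
    have hlt : (downList n ε).get ⟨(j : ℕ), hj0⟩ < (downList n ε).get ⟨(j : ℕ) + 1, hj1⟩ :=
      (List.sortedLT_iff_pairwise.mpr hL).strictMono_get (by simp)
    have : ((downList n ε).get ⟨(j : ℕ), hj0⟩ : ℕ)
        < ((downList n ε).get ⟨(j : ℕ) + 1, hj1⟩ : ℕ) := hlt
    push_cast
    omega
  · have hj : p - 1 < (downList n ε).length := by omega
    rw [getD_descHeights' ε h1 (p - 1) hj]
    have hb : ((downList n ε).get ⟨p - 1, hj⟩ : ℕ) < n := ((downList n ε).get ⟨p - 1, hj⟩).2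
    have : ((p : ℤ) - 1 : ℤ) = ((p - 1 : ℕ) : ℤ) := by push_cast [hp]; ring
    push_cast [Nat.cast_sub hp] at *
    omega


open Classical in
noncomputable def invEps (n p : ℕ) (a : Fin p → ℤ) : Fin n → ℤ := fun i =>
  if ∃ j : Fin p, (i : ℤ) = a j + 2 * (j : ℤ) then -1 else 1

lemma invEps_pm (a : Fin p → ℤ) (i : Fin n) : invEps n p a i = 1 ∨ invEps n p a i = -1 := by
  unfold invEps; split <;> simp

lemma invEps_eq_neg_one {a : Fin p → ℤ} {i : Fin n} :
    invEps n p a i = -1 ↔ ∃ j : Fin p, (i : ℤ) = a j + 2 * (j : ℤ) := by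
  unfold invEps
  split <;> rename_i hcond <;> simp [hcond]

lemma chain {a : Fin p → ℤ}
    (ha2 : ∀ (j : Fin p) (hj : (j : ℕ) + 1 < p), a j - 1 ≤ a ⟨(j : ℕ) + 1, hj⟩) :
    ∀ (d : ℕ) (j : Fin p) (hd : (j : ℕ) + d < p), a j - d ≤ a ⟨(j : ℕ) + d, hd⟩ := by
  intro d
  induction d with
  | zero => intro j hd; simp
  | succ d ih =>
    intro j hd
    have h1 : (j : ℕ) + d < p := by omega
    have i1 := ih j h1
    have i2 := ha2 ⟨(j : ℕ) + d, h1⟩ (by simpa [Nat.add_assoc] using hd)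
    have he : a ⟨(j : ℕ) + (d + 1), hd⟩ = a ⟨(j : ℕ) + d + 1, by omega⟩ := rfl
    rw [he]
    push_cast
    push_cast at i1
    linarith [i1, i2]

lemma posZ_mono {a : Fin p → ℤ}
    (ha2 : ∀ (j : Fin p) (hj : (j : ℕ) + 1 < p), a j - 1 ≤ a ⟨(j : ℕ) + 1, hj⟩)
    {j k : Fin p} (hjk : j ≤ k) :
    a j + 2 * (j : ℤ) + ((k : ℤ) - (j : ℤ)) ≤ a k + 2 * (k : ℤ) := by
  have hd : (j : ℕ) + ((k : ℕ) - (j : ℕ)) < p := by omega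
  have := chain ha2 ((k : ℕ) - (j : ℕ)) j hd
  have he : (⟨(j : ℕ) + ((k : ℕ) - (j : ℕ)), hd⟩ : Fin p) = k := Fin.ext (by simp; omega)
  rw [he] at this
  have hc : (((k : ℕ) - (j : ℕ) : ℕ) : ℤ) = (k : ℤ) - (j : ℤ) := by
    push_cast [Nat.cast_sub (show (j : ℕ) ≤ (k : ℕ) from hjk)]
    ring
  rw [hc] at this
  linarith

lemma posZ_strict {a : Fin p → ℤ}
    (ha2 : ∀ (j : Fin p) (hj : (j : ℕ) + 1 < p), a j - 1 ≤ a ⟨(j : ℕ) + 1, hj⟩)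
    {j k : Fin p} (hjk : j < k) :
    a j + 2 * (j : ℤ) < a k + 2 * (k : ℤ) := by
  have := posZ_mono ha2 (le_of_lt hjk)
  have : (j : ℤ) < (k : ℤ) := by exact_mod_cast hjk
  have := posZ_mono ha2 (le_of_lt hjk)
  linarith

lemma posZ_bounds (hp : 1 ≤ p) (h2pn : 2 * p ≤ n) {a : Fin p → ℤ}
    (ha1 : ∀ j, 1 ≤ a j)
    (ha2 : ∀ (j : Fin p) (hj : (j : ℕ) + 1 < p), a j - 1 ≤ a ⟨(j : ℕ) + 1, hj⟩)
    (ha3 : a ⟨p - 1, Nat.sub_lt hp Nat.one_pos⟩ ≤ (n : ℤ) - 2 * (p : ℤ) + 1)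
    (j : Fin p) : 1 + 2 * (j : ℤ) ≤ a j + 2 * (j : ℤ) ∧ a j + 2 * (j : ℤ) < (n : ℤ) := by
  constructor
  · have := ha1 j; linarith
  · set k : Fin p := ⟨p - 1, Nat.sub_lt hp Nat.one_pos⟩ with hk
    have hjk : j ≤ k := by
      rw [Fin.le_def]
      simp only [hk]
      omega
    have h1 := posZ_mono ha2 hjk
    have hkv : ((k : ℕ) : ℤ) = (p : ℤ) - 1 := by
      simp only [hk]
      push_cast [Nat.cast_sub hp]
      ring
    rw [hkv] at h1
    have hjv : (j : ℤ) ≤ (p : ℤ) - 1 := by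
      have := j.2; push_cast; omega
    have hn : (2 : ℤ) * p ≤ n := by exact_mod_cast h2pn
    linarith


def pf (n p : ℕ) (a : Fin p → ℤ)
    (hb : ∀ j : Fin p, 1 + 2 * (j : ℤ) ≤ a j + 2 * (j : ℤ) ∧ a j + 2 * (j : ℤ) < (n : ℤ)) :
    Fin p → Fin n :=
  fun j => ⟨(a j + 2 * (j : ℤ)).toNat, by have := hb j; omega⟩

lemma pf_coe {a : Fin p → ℤ} (hb : ∀ j : Fin p, 1 + 2 * (j : ℤ) ≤ a j + 2 * (j : ℤ) ∧
    a j + 2 * (j : ℤ) < (n : ℤ)) (j : Fin p) :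
    ((pf n p a hb j : Fin n) : ℤ) = a j + 2 * (j : ℤ) := by
  have := (hb j).1
  simp only [pf]
  omega

lemma pf_strictMono {a : Fin p → ℤ} (hb : ∀ j : Fin p, 1 + 2 * (j : ℤ) ≤ a j + 2 * (j : ℤ) ∧
    a j + 2 * (j : ℤ) < (n : ℤ))
    (ha2 : ∀ (j : Fin p) (hj : (j : ℕ) + 1 < p), a j - 1 ≤ a ⟨(j : ℕ) + 1, hj⟩) :
    StrictMono (pf n p a hb) := by
  intro j k hjk
  have hs := posZ_strict ha2 hjk
  have h1 := (hb j).1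
  rw [Fin.lt_def]
  simp only [pf]
  omega

lemma invEps_eq_neg_one' {a : Fin p → ℤ} (hb : ∀ j : Fin p, 1 + 2 * (j : ℤ) ≤ a j + 2 * (j : ℤ) ∧
    a j + 2 * (j : ℤ) < (n : ℤ)) {i : Fin n} :
    invEps n p a i = -1 ↔ ∃ j : Fin p, i = pf n p a hb j := by
  rw [invEps_eq_neg_one]
  apply exists_congr
  intro j
  rw [Fin.ext_iff]
  have := pf_coe hb j
  omega

lemma downList_invEps {a : Fin p → ℤ} (hb : ∀ j : Fin p, 1 + 2 * (j : ℤ) ≤ a j + 2 * (j : ℤ) ∧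
    a j + 2 * (j : ℤ) < (n : ℤ))
    (ha2 : ∀ (j : Fin p) (hj : (j : ℕ) + 1 < p), a j - 1 ≤ a ⟨(j : ℕ) + 1, hj⟩) :
    downList n (invEps n p a) = (List.finRange p).map (pf n p a hb) := by
  have : IsAntisymm (Fin n) (· < ·) := ⟨fun a b h1 h2 => absurd h2 (asymm h1)⟩
  have hs1 := sorted_downList (invEps n p a)
  have hs2 : ((List.finRange p).map (pf n p a hb)).Pairwise (· < ·) :=
    List.pairwise_map.mpr ((List.pairwise_lt_finRange p).imp
      fun hab => pf_strictMono hb ha2 hab)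
  refine List.Perm.eq_of_pairwise (fun a b _ _ h1 h2 => absurd h2 (asymm h1)) hs1 hs2 ?_
  refine List.perm_of_nodup_nodup_toFinset_eq hs1.nodup hs2.nodup ?_
  ext x
  simp only [List.mem_toFinset, mem_downList, List.mem_map, List.mem_finRange, true_and]
  rw [invEps_eq_neg_one' hb]
  constructor
  · rintro ⟨j, rfl⟩; exact ⟨j, rfl⟩
  · rintro ⟨j, rfl⟩; exact ⟨j, rfl⟩

lemma length_downList_invEps {a : Fin p → ℤ}
    (hb : ∀ j : Fin p, 1 + 2 * (j : ℤ) ≤ a j + 2 * (j : ℤ) ∧ a j + 2 * (j : ℤ) < (n : ℤ))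
    (ha2 : ∀ (j : Fin p) (hj : (j : ℕ) + 1 < p), a j - 1 ≤ a ⟨(j : ℕ) + 1, hj⟩) :
    (downList n (invEps n p a)).length = p := by
  rw [downList_invEps hb ha2]
  simp

lemma invEps_sum_nonneg {a : Fin p → ℤ}
    (hb : ∀ j : Fin p, 1 + 2 * (j : ℤ) ≤ a j + 2 * (j : ℤ) ∧ a j + 2 * (j : ℤ) < (n : ℤ))
    (ha2 : ∀ (j : Fin p) (hj : (j : ℕ) + 1 < p), a j - 1 ≤ a ⟨(j : ℕ) + 1, hj⟩)
    (i : Fin n) :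
    0 ≤ ∑ k ∈ Finset.univ.filter (fun k => k ≤ i), invEps n p a k := by
  classical
  rw [height_le _ (invEps_pm a)]
  set S : Finset (Fin p) := Finset.univ.filter (fun j => pf n p a hb j ≤ i) with hS
  have himg : (Finset.univ.filter fun k => invEps n p a k = -1 ∧ k ≤ i)
      = Finset.image (pf n p a hb) S := by
    ext k
    simp only [Finset.mem_filter, Finset.mem_univ, true_and, Finset.mem_image, hS]
    rw [invEps_eq_neg_one' hb]
    constructor
    · rintro ⟨⟨j, rfl⟩, hki⟩; exact ⟨j, hki, rfl⟩
    · rintro ⟨j, hji, rfl⟩; exact ⟨⟨j, rfl⟩, hji⟩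
  rw [himg, Finset.card_image_of_injective _ (pf_strictMono hb ha2).injective]
  rcases S.eq_empty_or_nonempty with hE | hne
  · rw [hE]
    simp
    positivity
  · set j0 := S.max' hne with hj0
    have hj0S : j0 ∈ S := S.max'_mem hne
    have hj0i : pf n p a hb j0 ≤ i := by
      rw [hS] at hj0S
      exact (Finset.mem_filter.mp hj0S).2
    have hsub : S ⊆ Finset.Iic j0 := fun x hx => Finset.mem_Iic.mpr (S.le_max' x hx)
    have hcard : S.card ≤ (j0 : ℕ) + 1 := by
      calc S.card ≤ (Finset.Iic j0).card := Finset.card_le_card hsub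
      _ = (j0 : ℕ) + 1 := by rw [Fin.card_Iic]
    have hlow : 1 + 2 * (j0 : ℤ) ≤ ((pf n p a hb j0 : Fin n) : ℤ) := by
      rw [pf_coe hb]
      exact (hb j0).1
    have hle : ((pf n p a hb j0 : Fin n) : ℕ) ≤ (i : ℕ) := hj0i
    have hcast : ((pf n p a hb j0 : Fin n) : ℤ) = (((pf n p a hb j0 : Fin n) : ℕ) : ℤ) := rfl
    push_cast at *
    omega


lemma getD_invEps {a : Fin p → ℤ}
    (hb : ∀ j : Fin p, 1 + 2 * (j : ℤ) ≤ a j + 2 * (j : ℤ) ∧ a j + 2 * (j : ℤ) < (n : ℤ))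
    (ha2 : ∀ (j : Fin p) (hj : (j : ℕ) + 1 < p), a j - 1 ≤ a ⟨(j : ℕ) + 1, hj⟩)
    (j : Fin p) :
    (descHeights' n (invEps n p a)).getD (j : ℕ) 0 = a j := by
  have hlen := length_downList_invEps hb ha2
  have hj : (j : ℕ) < (downList n (invEps n p a)).length := by omega
  rw [getD_descHeights' _ (invEps_pm a) (j : ℕ) hj]
  have hget : (downList n (invEps n p a)).get ⟨(j : ℕ), hj⟩ = pf n p a hb j := by
    have := downList_invEps hb ha2
    simp only [List.get_eq_getElem]
    rw [List.getElem_of_eq this]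
    simp
  rw [hget, pf_coe hb]
  ring

lemma invEps_roundtrip (ε : Fin n → ℤ)
    (h1 : ∀ i, ε i = 1 ∨ ε i = -1)
    (hcard : (Finset.univ.filter fun i => ε i = -1).card = p) :
    invEps n p (fun j : Fin p => (descHeights' n ε).getD (j : ℕ) 0) = ε := by
  have hlen : (downList n ε).length = p := by rw [length_downList, hcard]
  funext i
  have hiff : (∃ j : Fin p, (i : ℤ)
      = (descHeights' n ε).getD (j : ℕ) 0 + 2 * (j : ℤ)) ↔ ε i = -1 := by
    constructor
    · rintro ⟨j, hj⟩
      have hjl : (j : ℕ) < (downList n ε).length := by omega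
      rw [getD_descHeights' ε h1 (j : ℕ) hjl] at hj
      have : (i : ℤ) = (((downList n ε).get ⟨(j : ℕ), hjl⟩ : Fin n) : ℤ) := by linarith
      have hieq : i = (downList n ε).get ⟨(j : ℕ), hjl⟩ := Fin.ext (by exact_mod_cast this)
      rw [hieq]
      exact mem_downList.mp (List.get_mem _ _)
    · intro hi
      obtain ⟨m, hm⟩ := List.mem_iff_get.mp (mem_downList.mpr hi)
      refine ⟨⟨(m : ℕ), by omega⟩, ?_⟩
      have hjl : (m : ℕ) < (downList n ε).length := m.2
      rw [getD_descHeights' ε h1 (m : ℕ) hjl]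
      have : (downList n ε).get ⟨(m : ℕ), hjl⟩ = i := by rw [← hm]
      rw [this]
      push_cast
      ring
  show (if ∃ j : Fin p, (i : ℤ)
      = (descHeights' n ε).getD (j : ℕ) 0 + 2 * (j : ℤ) then (-1 : ℤ) else 1) = ε i
  by_cases hc : ∃ j : Fin p, (i : ℤ) = (descHeights' n ε).getD (j : ℕ) 0 + 2 * (j : ℤ)
  · rw [if_pos hc, hiff.mp hc]
  · rw [if_neg hc]
    rcases h1 i with hv | hv
    · rw [hv]
    · exact absurd (hiff.mpr hv) hc

end BallotAux

/-- The descent-height map is a bijection from ballot sequences of length `n` with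
`p` down-steps onto restricted sequences `(a₁,…,a_p)`: `a_j ≥ 1`, `a_{j+1} ≥ a_j − 1`,
and `a_p ≤ n − 2p + 1`. -/
theorem descHeights_bijOn (n p : ℕ) (hp : 1 ≤ p) (h : 2 * p ≤ n) :
    Set.BijOn (fun (ε : Fin n → ℤ) (j : Fin p) => (descHeights n ε).getD (j : ℕ) 0)
      {ε : Fin n → ℤ | IsBallot n p ε}
      {a : Fin p → ℤ | (∀ j, 1 ≤ a j) ∧
        (∀ (j : Fin p) (hj : (j : ℕ) + 1 < p), a j - 1 ≤ a ⟨(j : ℕ) + 1, hj⟩) ∧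
        a ⟨p - 1, by omega⟩ ≤ (n : ℤ) - 2 * (p : ℤ) + 1} := by
  have hdesc : ∀ ε : Fin n → ℤ, descHeights n ε = BallotAux.descHeights' n ε := fun ε => rfl
  refine Set.InvOn.bijOn (f' := BallotAux.invEps n p) ⟨?_, ?_⟩ ?_ ?_
  · intro ε hε
    obtain ⟨h1, hcard, h3⟩ := hε
    simp only [hdesc]
    exact BallotAux.invEps_roundtrip ε h1 hcard
  · rintro a ⟨ha1, ha2, ha3⟩
    have hb : ∀ j : Fin p, 1 + 2 * (j : ℤ) ≤ a j + 2 * (j : ℤ) ∧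
        a j + 2 * (j : ℤ) < (n : ℤ) :=
      fun j => BallotAux.posZ_bounds hp h ha1 ha2 ha3 j
    funext j
    simp only [hdesc]
    exact BallotAux.getD_invEps hb ha2 j
  · intro ε hε
    obtain ⟨h1, hcard, h3⟩ := hε
    have hf := BallotAux.forward_mem hp ε h1 hcard h3
    refine ⟨?_, ?_, ?_⟩
    · intro j; simpa [hdesc] using hf.1 j
    · intro j hj; simpa [hdesc] using hf.2.1 j hj
    · simpa [hdesc] using hf.2.2
  · rintro a ⟨ha1, ha2, ha3⟩
    have hb : ∀ j : Fin p, 1 + 2 * (j : ℤ) ≤ a j + 2 * (j : ℤ) ∧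
        a j + 2 * (j : ℤ) < (n : ℤ) :=
      fun j => BallotAux.posZ_bounds hp h ha1 ha2 ha3 j
    refine ⟨fun i => BallotAux.invEps_pm a i, ?_, ?_⟩
    · rw [← BallotAux.length_downList]
      exact BallotAux.length_downList_invEps hb ha2
    · exact BallotAux.invEps_sum_nonneg hb ha2
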